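/- If two bricks A and B tile a box Q ⊂ R^d (d ≥ 2) by translations and brick A does not by itself tile Q, then there is an index k such that for every j ≠ k, the j-th side length of B divides the j-th side length of Q (i.e. q_j/b_j ∈ Z). -/

import Mathlib

open MeasureTheory Set Complex


lemma aux_indicator_mul (S : Set ℝ) (t : ℝ) (z : ℂ) :
    ((S.indicator (fun _ => (1:ℝ)) t : ℝ) : ℂ) * z = S.indicator (fun _ => z) t := by
  by_cases h : t ∈ S <;> simp [h]

lemma aux_integrable (u v : ℝ) (k : ℂ) :
    Integrable fun t : ℝ => (Set.Ioo u v).indicator (fun s : ℝ => Complex.exp (k*s)) t := by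
  rw [integrable_indicator_iff measurableSet_Ioo]
  exact (Continuous.integrableOn_Icc (by fun_prop)).mono_set Set.Ioo_subset_Icc_self

lemma aux_int_exp (u L : ℝ) (hL : 0 ≤ L) (k : ℂ) (hk : k ≠ 0) :
    ∫ t : ℝ, (Set.Ioo u (u+L)).indicator (fun s : ℝ => Complex.exp (k*s)) t
      = Complex.exp (k*u) * (Complex.exp (k*L) - 1) / k := by
  rw [integral_indicator measurableSet_Ioo, ← MeasureTheory.integral_Ioc_eq_integral_Ioo,
    ← intervalIntegral.integral_of_le (by linarith), integral_exp_mul_complex hk]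
  rw [mul_sub, mul_one, ← Complex.exp_add]
  push_cast
  ring_nf

lemma aux_int_one (u L : ℝ) (hL : 0 ≤ L) :
    ∫ t : ℝ, (Set.Ioo u (u+L)).indicator (fun _ : ℝ => (1:ℂ)) t = (L:ℂ) := by
  rw [integral_indicator measurableSet_Ioo]
  simp [Real.volume_Ioo, ENNReal.toReal_ofReal hL, hL]

lemma box_prod (d : ℕ) (c s : Fin d → ℝ) (x : Fin d → ℝ) :
    Set.indicator {y : Fin d → ℝ | ∀ j, y j ∈ Set.Ioo 0 (s j)} (fun _ => (1:ℝ)) (x - c)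
      = ∏ j, (Set.Ioo (c j) (c j + s j)).indicator (fun _ => (1:ℝ)) (x j) := by
  by_cases h : ∀ j, x j - c j ∈ Set.Ioo 0 (s j)
  · rw [Set.indicator_of_mem (by exact h)]
    rw [Finset.prod_eq_one]
    intro j _
    have := h j
    simp only [Set.mem_Ioo] at this
    rw [Set.indicator_of_mem]
    constructor <;> [linarith [this.1]; linarith [this.2]]
  · push_neg at h
    obtain ⟨j, hj⟩ := h
    rw [Set.indicator_of_notMem (by exact fun hh => hj (hh j))]
    refine (Finset.prod_eq_zero (Finset.mem_univ j) ?_).symm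
    rw [Set.indicator_of_notMem]
    simp only [Set.mem_Ioo] at hj ⊢
    intro hh
    exact hj ⟨by linarith [hh.1], by linarith [hh.2]⟩

lemma box_prod_c (d : ℕ) (c s : Fin d → ℝ) (e : Fin d → ℂ) (x : Fin d → ℝ) :
    ((Set.indicator {y : Fin d → ℝ | ∀ j, y j ∈ Set.Ioo 0 (s j)} (fun _ => (1:ℝ)) (x - c) : ℝ) : ℂ)
        * ∏ j, Complex.exp (e j * x j)
      = ∏ j, (Set.Ioo (c j) (c j + s j)).indicator (fun t : ℝ => Complex.exp (e j * t)) (x j) := by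
  rw [box_prod]
  push_cast
  rw [← Finset.prod_mul_distrib]
  exact Finset.prod_congr rfl fun j _ => aux_indicator_mul _ _ _

lemma main_div (d : ℕ) (a b q : Fin d → ℝ) (ha : ∀ j, 0 < a j) (hb : ∀ j, 0 < b j)
    (hq : ∀ j, 0 < q j) (Λa Λb : Finset (Fin d → ℝ))
    (htile : ∀ᵐ x : Fin d → ℝ,
      (∑ l ∈ Λa, Set.indicator {y : Fin d → ℝ | ∀ j, y j ∈ Set.Ioo 0 (a j)}
          (fun _ => (1:ℝ)) (x - (l : Fin d → ℝ))) +
      (∑ l ∈ Λb, Set.indicator {y : Fin d → ℝ | ∀ j, y j ∈ Set.Ioo 0 (b j)}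
          (fun _ => (1:ℝ)) (x - l)) =
      Set.indicator {y : Fin d → ℝ | ∀ j, y j ∈ Set.Ioo 0 (q j)} (fun _ => (1:ℝ)) x)
    (i ℓ : Fin d) (hil : ℓ ≠ i) (hbl : ¬ ∃ n : ℤ, q ℓ = b ℓ * n) :
    ∃ n : ℤ, q i = a i * n := by
  classical
  have hπI : (2 * (Real.pi:ℂ) * Complex.I) ≠ 0 := by
    simp [Real.pi_ne_zero, Complex.I_ne_zero]
  set e : Fin d → ℂ := fun j =>
    if j = i then (2 * (Real.pi:ℂ) * Complex.I) / (a i)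
    else if j = ℓ then (2 * (Real.pi:ℂ) * Complex.I) / (b ℓ) else 0 with he
  have hei : e i = (2 * (Real.pi:ℂ) * Complex.I) / (a i) := by simp [he]
  have hel : e ℓ = (2 * (Real.pi:ℂ) * Complex.I) / (b ℓ) := by simp [he, hil]
  have hai : ((a i : ℂ)) ≠ 0 := by exact_mod_cast (ha i).ne'
  have hbl' : ((b ℓ : ℂ)) ≠ 0 := by exact_mod_cast (hb ℓ).ne'
  have heine : e i ≠ 0 := by rw [hei]; exact div_ne_zero hπI hai
  have helne : e ℓ ≠ 0 := by rw [hel]; exact div_ne_zero hπI hbl'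
  have heia : e i * (a i : ℂ) = 2 * (Real.pi:ℂ) * Complex.I := by
    rw [hei]; field_simp
  have helb : e ℓ * (b ℓ : ℂ) = 2 * (Real.pi:ℂ) * Complex.I := by
    rw [hel]; field_simp
  -- the product integrand for a box with corner c and sides s
  set G : (Fin d → ℝ) → (Fin d → ℝ) → (Fin d → ℝ) → ℂ := fun c s x =>
    ∏ j, (Set.Ioo (c j) (c j + s j)).indicator
      (fun t : ℝ => Complex.exp (e j * t)) (x j) with hGdef
  have hG_int : ∀ c s, Integrable (G c s) :=
    fun c s => Integrable.fintype_prod (fun j => aux_integrable _ _ _)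
  have hG_val : ∀ c s : Fin d → ℝ, ∫ x : Fin d → ℝ, G c s x
      = ∏ j, ∫ t : ℝ, (Set.Ioo (c j) (c j + s j)).indicator
          (fun t : ℝ => Complex.exp (e j * t)) t := by
    intro c s
    exact MeasureTheory.integral_fintype_prod_eq_prod
      (fun j (t : ℝ) => (Set.Ioo (c j) (c j + s j)).indicator
        (fun t : ℝ => Complex.exp (e j * t)) t)
  have hvanA : ∀ l : Fin d → ℝ, ∫ x : Fin d → ℝ, G l a x = 0 := by
    intro l
    rw [hG_val]
    refine Finset.prod_eq_zero (Finset.mem_univ i) ?_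
    rw [aux_int_exp (l i) (a i) (ha i).le (e i) heine, heia,
      Complex.exp_two_pi_mul_I]
    simp
  have hvanB : ∀ l : Fin d → ℝ, ∫ x : Fin d → ℝ, G l b x = 0 := by
    intro l
    rw [hG_val]
    refine Finset.prod_eq_zero (Finset.mem_univ ℓ) ?_
    rw [aux_int_exp (l ℓ) (b ℓ) (hb ℓ).le (e ℓ) helne, helb,
      Complex.exp_two_pi_mul_I]
    simp
  -- integrate the tiling identity against the weight
  have h1 : ∀ᵐ x : Fin d → ℝ,
      (((∑ l ∈ Λa, Set.indicator {y : Fin d → ℝ | ∀ j, y j ∈ Set.Ioo 0 (a j)}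
          (fun _ => (1:ℝ)) (x - l)) +
        (∑ l ∈ Λb, Set.indicator {y : Fin d → ℝ | ∀ j, y j ∈ Set.Ioo 0 (b j)}
          (fun _ => (1:ℝ)) (x - l)) : ℝ) : ℂ) * ∏ j, Complex.exp (e j * x j)
      = ((Set.indicator {y : Fin d → ℝ | ∀ j, y j ∈ Set.Ioo 0 (q j)}
          (fun _ => (1:ℝ)) x : ℝ) : ℂ) * ∏ j, Complex.exp (e j * x j) :=
    htile.mono fun x hx => by rw [hx]
  have h3 : ∀ x : Fin d → ℝ,
      (((∑ l ∈ Λa, Set.indicator {y : Fin d → ℝ | ∀ j, y j ∈ Set.Ioo 0 (a j)}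
          (fun _ => (1:ℝ)) (x - l)) +
        (∑ l ∈ Λb, Set.indicator {y : Fin d → ℝ | ∀ j, y j ∈ Set.Ioo 0 (b j)}
          (fun _ => (1:ℝ)) (x - l)) : ℝ) : ℂ) * ∏ j, Complex.exp (e j * x j)
      = (∑ l ∈ Λa, G l a x) + ∑ l ∈ Λb, G l b x := by
    intro x
    push_cast
    rw [add_mul, Finset.sum_mul, Finset.sum_mul]
    congr 1
    · exact Finset.sum_congr rfl fun l _ => box_prod_c d l a e x
    · exact Finset.sum_congr rfl fun l _ => box_prod_c d l b e x
  have h4 : ∀ x : Fin d → ℝ,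
      ((Set.indicator {y : Fin d → ℝ | ∀ j, y j ∈ Set.Ioo 0 (q j)}
          (fun _ => (1:ℝ)) x : ℝ) : ℂ) * ∏ j, Complex.exp (e j * x j)
      = G 0 q x := by
    intro x
    have := box_prod_c d 0 q e x
    simpa [hGdef] using this
  have hkey : ∫ x : Fin d → ℝ, G 0 q x = 0 := by
    have h5 : ∫ x : Fin d → ℝ, G 0 q x
        = ∫ x : Fin d → ℝ, ((∑ l ∈ Λa, G l a x) + ∑ l ∈ Λb, G l b x) := by
      refine integral_congr_ae (h1.mono fun x hx => ?_)
      rw [h3 x, h4 x] at hx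
      exact hx.symm
    rw [h5, integral_add (integrable_finset_sum _ fun l _ => hG_int l a)
      (integrable_finset_sum _ fun l _ => hG_int l b),
      integral_finset_sum _ (fun l _ => (hG_int l a)),
      integral_finset_sum _ (fun l _ => (hG_int l b))]
    simp [hvanA, hvanB]
  rw [hG_val] at hkey
  obtain ⟨j, -, hj0⟩ := Finset.prod_eq_zero_iff.1 hkey
  simp only [Pi.zero_apply] at hj0
  by_cases hji : j = i
  · subst hji
    rw [aux_int_exp 0 (q j) (hq j).le (e j) heine] at hj0
    simp only [Complex.ofReal_zero, mul_zero, Complex.exp_zero, one_mul,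
      div_eq_zero_iff, sub_eq_zero] at hj0
    rcases hj0 with hj0 | hj0
    · rw [Complex.exp_eq_one_iff] at hj0
      obtain ⟨n, hn⟩ := hj0
      refine ⟨n, ?_⟩
      have : (q j : ℂ) = (a j) * n := by
        rw [hei] at hn
        field_simp at hn
        -- hn : 2 * π * I * q j = n * (2 * π * I) * a j  (roughly)
        have h2 : ((q j : ℂ)) * (2 * (Real.pi:ℂ) * Complex.I)
            = ((a j : ℂ) * n) * (2 * (Real.pi:ℂ) * Complex.I) := by
          ring_nf
          ring_nf at hn
          linear_combination (2 * (Real.pi:ℂ) * Complex.I) * hn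
        exact mul_right_cancel₀ hπI h2
      exact_mod_cast this
    · exact absurd hj0 heine
  · exfalso
    by_cases hjl : j = ℓ
    · subst hjl
      rw [aux_int_exp 0 (q j) (hq j).le (e j) helne] at hj0
      simp only [Complex.ofReal_zero, mul_zero, Complex.exp_zero, one_mul,
        div_eq_zero_iff, sub_eq_zero] at hj0
      rcases hj0 with hj0 | hj0
      · rw [Complex.exp_eq_one_iff] at hj0
        obtain ⟨n, hn⟩ := hj0
        refine hbl ⟨n, ?_⟩
        have : (q j : ℂ) = (b j) * n := by
          rw [hel] at hn
          field_simp at hn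
          have h2 : ((q j : ℂ)) * (2 * (Real.pi:ℂ) * Complex.I)
              = ((b j : ℂ) * n) * (2 * (Real.pi:ℂ) * Complex.I) := by
            ring_nf
            ring_nf at hn
            linear_combination (2 * (Real.pi:ℂ) * Complex.I) * hn
          exact mul_right_cancel₀ hπI h2
        exact_mod_cast this
      · exact absurd hj0 helne
    · have hej : e j = 0 := by simp [he, hji, hjl]
      rw [hej] at hj0
      simp only [zero_mul, Complex.exp_zero] at hj0
      rw [aux_int_one 0 (q j) (hq j).le] at hj0
      exact absurd hj0 (by exact_mod_cast (hq j).ne')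


lemma oneD_tile (α : ℝ) (hα : 0 < α) (m : ℕ) (t : ℝ)
    (ht : ∀ c : ℕ, c ≤ m → t ≠ α * c) :
    ∑ c ∈ Finset.range m, (Set.Ioo 0 α).indicator (fun _ => (1:ℝ)) (t - α * c)
      = (Set.Ioo 0 (α * m)).indicator (fun _ => (1:ℝ)) t := by
  induction m with
  | zero => simp
  | succ m ih =>
    rw [Finset.sum_range_succ, ih (fun c hc => ht c (by omega))]
    have h0 : t ≠ 0 := by simpa using ht 0 (by omega)
    have hm : t ≠ α * m := ht m (by omega)
    have hm1 : t ≠ α * (m+1) := by simpa using ht (m+1) (by omega)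
    push_cast
    by_cases h1 : 0 < t ∧ t < α * m
    · rw [Set.indicator_of_mem (Set.mem_Ioo.2 h1),
        Set.indicator_of_notMem (by simp only [Set.mem_Ioo]; intro hh; linarith [hh.1]),
        Set.indicator_of_mem]
      · ring
      · exact Set.mem_Ioo.2 ⟨h1.1, by nlinarith [h1.2]⟩
    · rw [Set.indicator_of_notMem (by simpa [Set.mem_Ioo] using h1)]
      by_cases h2 : α * m < t ∧ t < α * (m+1)
      · rw [Set.indicator_of_mem, Set.indicator_of_mem]
        · ring
        · refine Set.mem_Ioo.2 ⟨?_, h2.2⟩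
          nlinarith [h2.1, hα.le]
        · exact Set.mem_Ioo.2 ⟨by linarith [h2.1], by linarith [h2.2]⟩
      · rw [Set.indicator_of_notMem, Set.indicator_of_notMem]
        · ring
        · simp only [Set.mem_Ioo]
          intro hh
          push_neg at h1 h2
          rcases lt_or_ge t (α * m) with h | h
          · exact absurd (h1 hh.1) (not_le.2 h)
          · rcases h.lt_or_eq.symm with h' | h'
            · exact hm h'.symm
            · linarith [h2 h', hh.2]
        · simp only [Set.mem_Ioo]
          intro hh
          push_neg at h1 h2
          have htpos : 0 < t := by nlinarith [hh.1, hα]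
          have h1' := h1 htpos
          have h2' := h2 (lt_of_le_of_ne h1' (fun e => hm e.symm))
          linarith [hh.2]


lemma null_cyl (d : ℕ) (j : Fin d) (F : Set ℝ) (hF : F.Finite) :
    volume {x : Fin d → ℝ | x j ∈ F} = 0 := by
  have hset : {x : Fin d → ℝ | x j ∈ F}
      = Set.univ.pi (Function.update (fun _ : Fin d => (Set.univ : Set ℝ)) j F) := by
    ext x
    simp only [Set.mem_setOf_eq, Set.mem_univ_pi, Function.update_apply]
    constructor
    · intro hx i
      by_cases h : i = j
      · subst h; simp [hx]
      · simp [h]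
    · intro hx
      have := hx j
      simpa using this
  rw [hset, volume_pi_pi]
  refine Finset.prod_eq_zero (Finset.mem_univ j) ?_
  simp [hF.measure_zero]

lemma ind_shift (u α t : ℝ) :
    (Set.Ioo u (u + α)).indicator (fun _ => (1:ℝ)) t
      = (Set.Ioo 0 α).indicator (fun _ => (1:ℝ)) (t - u) := by
  by_cases h : t ∈ Set.Ioo u (u + α)
  · rw [Set.indicator_of_mem h, Set.indicator_of_mem]
    simp only [Set.mem_Ioo] at h ⊢
    constructor <;> [linarith [h.1]; linarith [h.2]]
  · rw [Set.indicator_of_notMem h, Set.indicator_of_notMem]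
    simp only [Set.mem_Ioo] at h ⊢
    intro hh
    exact h ⟨by linarith [hh.1], by linarith [hh.2]⟩

lemma grid_tile (d : ℕ) (a q : Fin d → ℝ) (ha : ∀ j, 0 < a j) (hq : ∀ j, 0 < q j)
    (m : Fin d → ℕ) (hm : ∀ j, q j = a j * m j) :
    ∃ Λ : Finset (Fin d → ℝ), ∀ᵐ x : Fin d → ℝ,
      (∑ l ∈ Λ, Set.indicator {y : Fin d → ℝ | ∀ j, y j ∈ Set.Ioo 0 (a j)}
          (fun _ => (1:ℝ)) (x - l))
        = Set.indicator {y : Fin d → ℝ | ∀ j, y j ∈ Set.Ioo 0 (q j)} (fun _ => (1:ℝ)) x := by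
  classical
  set g : (Fin d → ℕ) → (Fin d → ℝ) := fun c j => a j * c j with hg
  have ginj : Function.Injective g := by
    intro c c' h
    funext j
    have := congrFun h j
    simp only [hg] at this
    exact_mod_cast mul_left_cancel₀ (ha j).ne' this
  refine ⟨(Fintype.piFinset fun j => Finset.range (m j)).image g, ?_⟩
  set N : Set (Fin d → ℝ) :=
    ⋃ j : Fin d, {x : Fin d → ℝ | x j ∈ (fun c : ℕ => a j * c) '' Set.Iic (m j)} with hN
  have hNnull : volume N = 0 :=
    measure_iUnion_null fun j => null_cyl d j _ ((Set.finite_Iic _).image _)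
  rw [MeasureTheory.ae_iff]
  refine measure_mono_null (fun x hx => ?_) hNnull
  simp only [Set.mem_setOf_eq] at hx
  by_contra hxN
  apply hx
  have hgood : ∀ j : Fin d, ∀ c : ℕ, c ≤ m j → x j ≠ a j * c := by
    intro j c hc heq
    exact hxN (Set.mem_iUnion.2 ⟨j, ⟨c, hc, heq.symm⟩⟩)
  rw [Finset.sum_image (fun c _ c' _ h => ginj h)]
  have hterm : ∀ c : Fin d → ℕ,
      Set.indicator {y : Fin d → ℝ | ∀ j, y j ∈ Set.Ioo 0 (a j)} (fun _ => (1:ℝ)) (x - g c)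
        = ∏ j, (Set.Ioo 0 (a j)).indicator (fun _ => (1:ℝ)) (x j - a j * c j) := by
    intro c
    rw [box_prod d (g c) a x]
    exact Finset.prod_congr rfl fun j _ => ind_shift (g c j) (a j) (x j)
  simp only [hterm]
  rw [← Finset.prod_univ_sum (fun j => Finset.range (m j))
    (fun j c => (Set.Ioo 0 (a j)).indicator (fun _ => (1:ℝ)) (x j - a j * c))]
  have hfac : ∀ j : Fin d,
      ∑ c ∈ Finset.range (m j), (Set.Ioo 0 (a j)).indicator (fun _ => (1:ℝ)) (x j - a j * c)
        = (Set.Ioo 0 (q j)).indicator (fun _ => (1:ℝ)) (x j) := by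
    intro j
    rw [oneD_tile (a j) (ha j) (m j) (x j) (hgood j), ← hm j]
  rw [Finset.prod_congr rfl fun j _ => hfac j]
  have := box_prod d 0 q x
  simp only [Pi.zero_apply, zero_add, sub_zero] at this
  exact this.symm


/-- If bricks `A` and `B` tile a box `Q` of dimensions `q` and `A` does not by itself
tile `Q`, then there is an index `k` such that for every `j ≠ k` the side `b j` divides
`q j` (i.e. `q j / b j` is an integer). -/
theorem side_divisibility_of_two_brick_tiling (d : ℕ) (hd : 2 ≤ d)
    (a b q : Fin d → ℝ) (ha : ∀ j, 0 < a j) (hb : ∀ j, 0 < b j) (hq : ∀ j, 0 < q j)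
    (A B Q : Set (EuclideanSpace ℝ (Fin d)))
    (hA : A = {x : EuclideanSpace ℝ (Fin d) | ∀ j, x j ∈ Set.Ioo 0 (a j)})
    (hB : B = {x : EuclideanSpace ℝ (Fin d) | ∀ j, x j ∈ Set.Ioo 0 (b j)})
    (hQ : Q = {x : EuclideanSpace ℝ (Fin d) | ∀ j, x j ∈ Set.Ioo 0 (q j)})
    (Λa Λb : Finset (EuclideanSpace ℝ (Fin d)))
    (htile : ∀ᵐ x : EuclideanSpace ℝ (Fin d),
      (∑ l ∈ Λa, A.indicator (fun _ => (1 : ℝ)) (x - l)) +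
      (∑ l ∈ Λb, B.indicator (fun _ => (1 : ℝ)) (x - l)) =
      Q.indicator (fun _ => (1 : ℝ)) x)
    (hnotA : ¬ ∃ Λ : Finset (EuclideanSpace ℝ (Fin d)),
      ∀ᵐ x : EuclideanSpace ℝ (Fin d),
        (∑ l ∈ Λ, A.indicator (fun _ => (1 : ℝ)) (x - l)) =
        Q.indicator (fun _ => (1 : ℝ)) x) :
    ∃ k : Fin d, ∀ j : Fin d, j ≠ k → ∃ n : ℤ, q j = b j * n := by
  subst hA hB hQ
  by_contra hcon
  push_neg at hcon
  -- two distinct non-divisible directions for b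
  obtain ⟨j1, -, hj1⟩ := hcon ⟨0, by omega⟩
  obtain ⟨j2, hj21, hj2⟩ := hcon j1
  -- transfer the tiling identity to the product space
  have htile' : ∀ᵐ x : Fin d → ℝ,
      (∑ l ∈ (Λa.image WithLp.ofLp),
        Set.indicator {y : Fin d → ℝ | ∀ j, y j ∈ Set.Ioo 0 (a j)}
          (fun _ => (1:ℝ)) (x - l)) +
      (∑ l ∈ (Λb.image WithLp.ofLp),
        Set.indicator {y : Fin d → ℝ | ∀ j, y j ∈ Set.Ioo 0 (b j)}
          (fun _ => (1:ℝ)) (x - l)) =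
      Set.indicator {y : Fin d → ℝ | ∀ j, y j ∈ Set.Ioo 0 (q j)} (fun _ => (1:ℝ)) x := by
    have mp := PiLp.volume_preserving_toLp (Fin d)
    have := mp.quasiMeasurePreserving.ae htile
    refine this.mono fun x hx => ?_
    rw [Finset.sum_image (fun _ _ _ _ h => WithLp.ofLp_injective 2 h),
      Finset.sum_image (fun _ _ _ _ h => WithLp.ofLp_injective 2 h)]
    simpa [Set.indicator_apply] using hx
  -- every side of A divides the corresponding side of Q
  have hdiv : ∀ i : Fin d, ∃ n : ℤ, q i = a i * n := by
    intro i
    by_cases hi : i = j1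
    · refine main_div d a b q ha hb hq (Λa.image WithLp.ofLp) (Λb.image WithLp.ofLp) htile' i j2 (hi ▸ hj21) ?_
      rintro ⟨n, hn⟩
      exact hj2 n hn
    · refine main_div d a b q ha hb hq (Λa.image WithLp.ofLp) (Λb.image WithLp.ofLp) htile' i j1 (fun h => hi h.symm) ?_
      rintro ⟨n, hn⟩
      exact hj1 n hn
  -- extract natural number multiplicities
  have hdiv' : ∀ i : Fin d, ∃ mi : ℕ, q i = a i * mi := by
    intro i
    obtain ⟨n, hn⟩ := hdiv i
    have hnpos : 0 < n := by
      have : (0:ℝ) < a i * n := hn ▸ hq i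
      have h2 : (0:ℝ) < (n:ℝ) := by
        by_contra h3
        push_neg at h3
        nlinarith [ha i]
      exact_mod_cast h2
    refine ⟨n.toNat, ?_⟩
    rw [hn]
    congr 1
    rw [← Int.cast_natCast, Int.toNat_of_nonneg hnpos.le]
  choose m hm using hdiv'
  obtain ⟨Λ, hΛ⟩ := grid_tile d a q ha hq m hm
  refine hnotA ⟨Λ.image (WithLp.toLp 2), ?_⟩
  have mp := PiLp.volume_preserving_ofLp (Fin d)
  have := mp.quasiMeasurePreserving.ae hΛ
  refine this.mono fun x hx => ?_
  rw [Finset.sum_image (fun _ _ _ _ h => WithLp.toLp_injective 2 h)]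
  simpa [Set.indicator_apply] using hx
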